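/- In the affine probabilistic λ-calculus, the one-step reduction relation on finite distributions over programs (reducing one term of the support at each step) is strongly normalizing. -/

import Mathlib

noncomputable section
open Classical

/-- Terms of the affine probabilistic λ-calculus (named variables). -/
inductive Tm : Type where
  | var : ℕ → Tm
  | lam : ℕ → Tm → Tm
  | app : Tm → Tm → Tm
  | choice : Tm → Tm → Tm
  | omega : Tm
  deriving DecidableEq

/-- Capture-avoiding substitution of a closed term `V` for variable `x`. -/
def Tm.subst (x : ℕ) (V : Tm) : Tm → Tm
  | .var y => if y = x then V else .var y
  | .lam y M => if y = x then .lam y M else .lam y (Tm.subst x V M)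
  | .app M N => .app (Tm.subst x V M) (Tm.subst x V N)
  | .choice M N => .choice (Tm.subst x V M) (Tm.subst x V N)
  | .omega => .omega

/-- Values are abstractions. -/
def Tm.IsVal : Tm → Prop
  | .lam _ _ => True
  | _ => False

/-- The affine typing judgement `Γ ⊢ M`. -/
inductive Affine : Finset ℕ → Tm → Prop where
  | var {Γ : Finset ℕ} {x : ℕ} : x ∈ Γ → Affine Γ (.var x)
  | lam {Γ : Finset ℕ} {x : ℕ} {M : Tm} : Affine (insert x Γ) M → Affine Γ (.lam x M)
  | app {Γ Δ : Finset ℕ} {M N : Tm} : Disjoint Γ Δ → Affine Γ M → Affine Δ N →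
      Affine (Γ ∪ Δ) (.app M N)
  | choice {Γ : Finset ℕ} {M N : Tm} : Affine Γ M → Affine Γ N → Affine Γ (.choice M N)
  | omega {Γ : Finset ℕ} : Affine Γ .omega

/-- Finite (sub)distributions over terms. -/
abbrev TDist := Tm →₀ ℝ

/-- Big-step evaluation `M ⇓ D`. -/
inductive BigStep : Tm → TDist → Prop where
  | omega : BigStep .omega 0
  | val {x : ℕ} {M : Tm} : BigStep (.lam x M) (Finsupp.single (.lam x M) 1)
  | choice {M N : Tm} {D E : TDist} : BigStep M D → BigStep N E →
      BigStep (.choice M N) ((1 / 2 : ℝ) • D + (1 / 2 : ℝ) • E)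
  | app {M N : Tm} {D E : TDist} {F : Tm → Tm → TDist} {bv : Tm → ℕ} {bd : Tm → Tm} :
      BigStep M D → BigStep N E →
      (∀ f ∈ D.support, f = Tm.lam (bv f) (bd f)) →
      (∀ f ∈ D.support, ∀ v ∈ E.support, BigStep (Tm.subst (bv f) v (bd f)) (F f v)) →
      BigStep (.app M N) (D.sum fun f p => E.sum fun v q => (p * q) • F f v)

/-- The semantics of a term: the (unique) big-step result, if any. -/
def sem (M : Tm) : TDist := if h : ∃ D, BigStep M D then h.choose else 0

/-- Weight (total mass) of a subdistribution. -/
def wt (D : TDist) : ℝ := D.sum fun _ p => p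

/-- Probability that a term accepts a trace (a list of value arguments). -/
def Pr : List Tm → Tm → ℝ
  | [] => fun M => wt (sem M)
  | V :: s => fun M => (sem M).sum fun W p =>
      p * (match W with
           | Tm.lam x body => Pr s (Tm.subst x V body)
           | _ => 0)

/-- The trace distance. -/
def deltaTr (M N : Tm) : ℝ := ⨆ s : List Tm, |Pr s M - Pr s N|

/-- One-step operational semantics of programs. -/
inductive Step : Tm → TDist → Prop where
  | omega : Step .omega 0
  | choice {M N : Tm} :
      Step (.choice M N)
        ((1 / 2 : ℝ) • Finsupp.single M 1 + (1 / 2 : ℝ) • Finsupp.single N 1)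
  | beta {x : ℕ} {M V : Tm} : V.IsVal →
      Step (.app (.lam x M) V) (Finsupp.single (Tm.subst x V M) 1)
  | appL {M N : Tm} {D : TDist} : Step M D →
      Step (.app M N) (D.sum fun L p => p • Finsupp.single (Tm.app L N) 1)
  | appR {V N : Tm} {D : TDist} : V.IsVal → Step N D →
      Step (.app V N) (D.sum fun L p => p • Finsupp.single (Tm.app V L) 1)

/-- One-step reduction on distributions over programs: a non-value term of the
support is reduced. -/
inductive DStep : TDist → TDist → Prop where
  | mk {D : TDist} {M : Tm} {E : TDist} {α : ℝ} :
      0 < α → M ∉ D.support → ¬ M.IsVal → Step M E →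
      DStep (D + α • Finsupp.single M 1) (D + α • E)

/-- Distributions over programs (closed terms). -/
def ProgDist (D : TDist) : Prop := ∀ M ∈ D.support, Affine ∅ M

/-- Size measure on terms. -/
def tsize : Tm → ℕ
  | .var _ => 1
  | .lam _ M => 1 + tsize M
  | .app M N => tsize M + tsize N
  | .choice M N => 1 + max (tsize M) (tsize N)
  | .omega => 0

lemma subst_of_not_mem {Γ : Finset ℕ} {M : Tm} (h : Affine Γ M) :
    ∀ x V, x ∉ Γ → Tm.subst x V M = M := by
  induction h with
  | var hy =>
      intro x V hx
      simp only [Tm.subst]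
      rw [if_neg]; rintro rfl; exact hx hy
  | lam hM ih =>
      intro x V hx
      rename_i Γ y M
      simp only [Tm.subst]
      by_cases hxy : y = x
      · simp [hxy]
      · rw [if_neg hxy, ih x V]
        simp [Finset.mem_insert, hx]
        rintro rfl; exact hxy rfl
  | app hdis hM hN ihM ihN =>
      intro x V hx
      simp only [Finset.mem_union, not_or] at hx
      simp only [Tm.subst, ihM x V hx.1, ihN x V hx.2]
  | choice hM hN ihM ihN =>
      intro x V hx
      simp only [Tm.subst, ihM x V hx, ihN x V hx]
  | omega => intro x V hx; rfl

lemma tsize_subst {Γ : Finset ℕ} {M : Tm} (h : Affine Γ M) :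
    ∀ x V, tsize (Tm.subst x V M) ≤ tsize M + tsize V := by
  induction h with
  | var hy =>
      intro x V
      simp only [Tm.subst]
      split <;> simp [tsize]
  | lam hM ih =>
      intro x V
      rename_i Γ y M
      simp only [Tm.subst]
      by_cases hxy : y = x
      · rw [if_pos hxy]; omega
      · rw [if_neg hxy]
        have := ih x V
        simp only [tsize]; omega
  | app hdis hM hN ihM ihN =>
      intro x V
      rename_i Γ Δ M N
      by_cases hx : x ∈ Γ
      · have hxΔ : x ∉ Δ := fun h' => (Finset.disjoint_left.mp hdis hx) h'
        have := ihM x V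
        simp only [Tm.subst, subst_of_not_mem hN x V hxΔ, tsize]
        omega
      · have := ihN x V
        simp only [Tm.subst, subst_of_not_mem hM x V hx, tsize]
        omega
  | choice hM hN ihM ihN =>
      intro x V
      have h1 := ihM x V
      have h2 := ihN x V
      simp only [Tm.subst, tsize]
      omega
  | omega => intro x V; simp [Tm.subst, tsize]

/-- The measure on distributions. -/
def mu (D : TDist) : ℕ := D.support.sum fun M => 3 ^ tsize M

lemma sum_union_le' (s t : Finset Tm) (f : Tm → ℕ) :
    (s ∪ t).sum f ≤ s.sum f + t.sum f := by
  calc (s ∪ t).sum f ≤ (s ∪ t).sum f + (s ∩ t).sum f := Nat.le_add_right _ _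
    _ = s.sum f + t.sum f := Finset.sum_union_inter

lemma affine_lam_inv {Γ : Finset ℕ} {x : ℕ} {M : Tm} (h : Affine Γ (.lam x M)) :
    Affine (insert x Γ) M := by
  cases h with
  | lam hb => exact hb

lemma affine_app_inv {Γ : Finset ℕ} {M N : Tm} (h : Affine Γ (.app M N)) :
    ∃ Γ₁ Γ₂, Γ = Γ₁ ∪ Γ₂ ∧ Affine Γ₁ M ∧ Affine Γ₂ N := by
  cases h with
  | app hdis hM hN => exact ⟨_, _, rfl, hM, hN⟩

lemma affine_app_inv_empty {M N : Tm} (h : Affine ∅ (.app M N)) :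
    Affine ∅ M ∧ Affine ∅ N := by
  obtain ⟨Γ₁, Γ₂, hEq, hM, hN⟩ := affine_app_inv h
  obtain ⟨h1, h2⟩ := Finset.union_eq_empty.mp hEq.symm
  subst h1; subst h2; exact ⟨hM, hN⟩

lemma step_decr {M : Tm} {E : TDist} (hs : Step M E) (h : Affine ∅ M) :
    (E.support.sum fun N => 3 ^ tsize N) < 3 ^ tsize M := by
  induction hs with
  | omega => simp [tsize]
  | choice =>
      rename_i M N
      refine lt_of_le_of_lt (Finset.sum_le_sum_of_subset (t := insert M {N}) ?_) ?_
      · refine Finsupp.support_add.trans ?_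
        intro x hx
        simp only [Finset.mem_union] at hx
        rcases hx with hx | hx <;>
        · have := Finsupp.support_smul hx
          simp only [Finsupp.support_single_ne_zero _ (one_ne_zero), Finset.mem_singleton] at this
          simp [this]
      · refine lt_of_le_of_lt
          (show ((insert M {N} : Finset Tm).sum fun K => 3 ^ tsize K)
              ≤ 3 ^ tsize M + 3 ^ tsize N from ?_) ?_
        · rcases eq_or_ne M N with rfl | hne
          · simp
          · rw [Finset.sum_insert (by simp [hne]), Finset.sum_singleton]
        · show 3 ^ tsize M + 3 ^ tsize N < 3 ^ tsize (Tm.choice M N)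
          have hpM : 0 < 3 ^ tsize M := Nat.pow_pos (by norm_num)
          have hpN : 0 < 3 ^ tsize N := Nat.pow_pos (by norm_num)
          simp only [tsize]
          rcases le_total (tsize M) (tsize N) with hle | hle
          · have h1 : 3 ^ tsize M ≤ 3 ^ tsize N := Nat.pow_le_pow_right (by norm_num) hle
            rw [max_eq_right hle, pow_add]
            omega
          · have h1 : 3 ^ tsize N ≤ 3 ^ tsize M := Nat.pow_le_pow_right (by norm_num) hle
            rw [max_eq_left hle, pow_add]
            omega
  | beta hV =>
      rename_i x M V
      have hM : Affine (insert x ∅) M := by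
        exact affine_lam_inv (affine_app_inv_empty h).1
      have hle := tsize_subst hM x V
      rw [Finsupp.support_single_ne_zero _ (one_ne_zero), Finset.sum_singleton]
      have : tsize (Tm.subst x V M) < tsize (Tm.app (Tm.lam x M) V) := by
        simp only [tsize]; omega
      exact Nat.pow_lt_pow_right (by norm_num) this
  | appL hs ih =>
      rename_i M N D
      have ihlt := ih (affine_app_inv_empty h).1
      refine lt_of_le_of_lt
        (Finset.sum_le_sum_of_subset (t := D.support.image (fun L => Tm.app L N)) ?_) ?_
      · refine Finsupp.support_sum.trans ?_
        intro x hx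
        simp only [Finset.mem_biUnion] at hx
        obtain ⟨L, hL, hx⟩ := hx
        have := Finsupp.support_smul hx
        simp only [Finsupp.support_single_ne_zero _ (one_ne_zero), Finset.mem_singleton] at this
        subst this
        exact Finset.mem_image_of_mem _ hL
      · rw [Finset.sum_image (by intro a _ b _ hab; cases hab; rfl)]
        calc (D.support.sum fun L => 3 ^ tsize (Tm.app L N))
            = (D.support.sum fun L => 3 ^ tsize L) * 3 ^ tsize N := by
              rw [Finset.sum_mul]
              exact Finset.sum_congr rfl fun L _ => by rw [tsize, pow_add]
          _ < 3 ^ tsize M * 3 ^ tsize N :=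
              Nat.mul_lt_mul_of_lt_of_le ihlt le_rfl (Nat.pow_pos (by norm_num))
          _ = 3 ^ tsize (Tm.app M N) := by rw [tsize, pow_add]
  | appR hV hs ih =>
      rename_i V N D
      have ihlt := ih (affine_app_inv_empty h).2
      refine lt_of_le_of_lt
        (Finset.sum_le_sum_of_subset (t := D.support.image (fun L => Tm.app V L)) ?_) ?_
      · refine Finsupp.support_sum.trans ?_
        intro x hx
        simp only [Finset.mem_biUnion] at hx
        obtain ⟨L, hL, hx⟩ := hx
        have := Finsupp.support_smul hx
        simp only [Finsupp.support_single_ne_zero _ (one_ne_zero), Finset.mem_singleton] at this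
        subst this
        exact Finset.mem_image_of_mem _ hL
      · rw [Finset.sum_image (by intro a _ b _ hab; cases hab; rfl)]
        calc (D.support.sum fun L => 3 ^ tsize (Tm.app V L))
            = 3 ^ tsize V * (D.support.sum fun L => 3 ^ tsize L) := by
              rw [Finset.mul_sum]
              exact Finset.sum_congr rfl fun L _ => by rw [tsize, pow_add]
          _ < 3 ^ tsize V * 3 ^ tsize N :=
              Nat.mul_lt_mul_of_le_of_lt le_rfl ihlt (Nat.pow_pos (by norm_num))
          _ = 3 ^ tsize (Tm.app V N) := by rw [tsize, pow_add]

lemma dstep_decr {D E : TDist} (h : DStep D E) (hP : ProgDist D) : mu E < mu D := by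
  cases h with
  | mk hα hM hMv hs =>
      rename_i D M E α
      have hαne : α ≠ 0 := ne_of_gt hα
      have hsingle : (α • Finsupp.single M (1 : ℝ)) = Finsupp.single M α := by
        rw [Finsupp.smul_single, smul_eq_mul, mul_one]
      have hsupp1 : (α • Finsupp.single M (1 : ℝ)).support = {M} := by
        rw [hsingle, Finsupp.support_single_ne_zero _ hαne]
      have hdis : Disjoint D.support (α • Finsupp.single M (1 : ℝ)).support := by
        rw [hsupp1, Finset.disjoint_singleton_right]; exact hM
      have hsuppL : (D + α • Finsupp.single M (1 : ℝ)).support = D.support ∪ {M} := by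
        rw [Finsupp.support_add_eq hdis, hsupp1]
      have hMA : Affine ∅ M := by
        apply hP
        rw [hsuppL]
        simp
      have hstep := step_decr hs hMA
      have hmuL : mu (D + α • Finsupp.single M 1)
          = (D.support.sum fun K => 3 ^ tsize K) + 3 ^ tsize M := by
        rw [mu, hsuppL, Finset.sum_union (by rwa [hsupp1] at hdis), Finset.sum_singleton]
      have hsubR : (D + α • E).support ⊆ D.support ∪ E.support := by
        refine Finsupp.support_add.trans ?_
        exact Finset.union_subset_union le_rfl (Finsupp.support_smul)
      have hmuR : mu (D + α • E)
          ≤ (D.support.sum fun K => 3 ^ tsize K) + (E.support.sum fun K => 3 ^ tsize K) := by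
        calc mu (D + α • E)
            ≤ (D.support ∪ E.support).sum fun K => 3 ^ tsize K :=
              Finset.sum_le_sum_of_subset hsubR
          _ ≤ _ := sum_union_le' _ _ _
      omega

/-- the one-step reduction relation on distributions over programs
is strongly normalising: there is no infinite reduction sequence. -/
theorem dstep_strongly_normalising :
    ¬ ∃ f : ℕ → TDist, (∀ n, ProgDist (f n)) ∧ ∀ n, DStep (f n) (f (n + 1)) := by
  rintro ⟨f, hP, hstep⟩
  have hdec : ∀ n, mu (f (n + 1)) < mu (f n) := fun n => dstep_decr (hstep n) (hP n)
  have key : ∀ n, mu (f n) + n ≤ mu (f 0) := by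
    intro n
    induction n with
    | zero => simp
    | succ n ih => have := hdec n; omega
  have := key (mu (f 0) + 1)
  omega

end
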